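/- Let X, Y be principal 𝕋-bundles, Δ : S(C₀^𝕋(X)) → S(C₀^𝕋(Y)) a surjective isometry, t₀ ∈ X, and s₀ ∈ Y such that Δ maps F_{t₀,1} := {a ∈ B : a(t₀)=1} onto F_{s₀,1}^Y. If a ∈ S(C₀^𝕋(X)) vanishes on a 𝕋-invariant open neighbourhood U of t₀ and there exists b ∈ F_{t₀,1} with supp(b) ⊆ U (so that a·b̄ = 0 pointwise and ‖a ± b‖ = 1), and if moreover Δ(−F_{t₀,1}) = −Δ(F_{t₀,1}), then Δ(a)(s₀) = 0. -/

import Mathlib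

open scoped ZeroAtInfty

/-- `𝕋`-equivariance of a function in `C₀(Z, ℂ)`. -/
def CircleEqv {Z : Type*} [TopologicalSpace Z] [MulAction Circle Z] (a : C₀(Z, ℂ)) : Prop :=
  ∀ (l : Circle) (t : Z), a (l • t) = (l : ℂ) * a t

lemma C0_norm_apply_le {Z : Type*} [TopologicalSpace Z] (f : C₀(Z, ℂ)) (x : Z) :
    ‖f x‖ ≤ ‖f‖ := by
  rw [← ZeroAtInftyContinuousMap.norm_toBCF_eq_norm]
  exact f.toBCF.norm_coe_le_norm x

lemma C0_norm_le {Z : Type*} [TopologicalSpace Z] (f : C₀(Z, ℂ)) {C : ℝ} (hC : 0 ≤ C)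
    (h : ∀ x, ‖f x‖ ≤ C) : ‖f‖ ≤ C := by
  rw [← ZeroAtInftyContinuousMap.norm_toBCF_eq_norm]
  exact (BoundedContinuousFunction.norm_le hC).2 h

theorem stmt15 {X Y : Type*} [TopologicalSpace X] [LocallyCompactSpace X] [T2Space X]
    [MulAction Circle X] [ContinuousSMul Circle X]
    [TopologicalSpace Y] [LocallyCompactSpace Y] [T2Space Y]
    [MulAction Circle Y] [ContinuousSMul Circle Y]
    (hfreeX : ∀ (l : Circle) (t : X), l • t = t → l = 1)
    (hfreeY : ∀ (l : Circle) (t : Y), l • t = t → l = 1)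
    (Δ : C₀(X, ℂ) → C₀(Y, ℂ))
    (hmaps : ∀ a : C₀(X, ℂ), CircleEqv a → ‖a‖ = 1 → CircleEqv (Δ a) ∧ ‖Δ a‖ = 1)
    (hsurj : ∀ b : C₀(Y, ℂ), CircleEqv b → ‖b‖ = 1 →
      ∃ a : C₀(X, ℂ), CircleEqv a ∧ ‖a‖ = 1 ∧ Δ a = b)
    (hiso : ∀ a b : C₀(X, ℂ), CircleEqv a → ‖a‖ = 1 → CircleEqv b → ‖b‖ = 1 →
      ‖Δ a - Δ b‖ = ‖a - b‖)
    (t₀ : X) (s₀ : Y)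
    (hface : Δ '' {a : C₀(X, ℂ) | CircleEqv a ∧ ‖a‖ ≤ 1 ∧ a t₀ = 1} =
      {b : C₀(Y, ℂ) | CircleEqv b ∧ ‖b‖ ≤ 1 ∧ b s₀ = 1})
    (hneg : Δ '' ((fun a => -a) '' {a : C₀(X, ℂ) | CircleEqv a ∧ ‖a‖ ≤ 1 ∧ a t₀ = 1}) =
      (fun b => -b) '' (Δ '' {a : C₀(X, ℂ) | CircleEqv a ∧ ‖a‖ ≤ 1 ∧ a t₀ = 1}))
    (a : C₀(X, ℂ)) (ha : CircleEqv a) (ha1 : ‖a‖ = 1)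
    (U : Set X) (hU : IsOpen U) (ht₀U : t₀ ∈ U)
    (hUinv : ∀ (l : Circle), ∀ t ∈ U, l • t ∈ U)
    (haU : ∀ t ∈ U, a t = 0)
    (b : C₀(X, ℂ)) (hb : CircleEqv b ∧ ‖b‖ ≤ 1 ∧ b t₀ = 1)
    (hbU : ∀ t ∉ U, b t = 0) :
    Δ a s₀ = 0 := by
  obtain ⟨hbE, hbn, hbt0⟩ := hb
  -- pointwise bound for a ± b
  have hpt : ∀ (c : ℂ), ‖c‖ = 1 → ∀ x : X, ‖a x + c * b x‖ ≤ 1 := by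
    intro c hc x
    by_cases hx : x ∈ U
    · rw [haU x hx, zero_add, norm_mul, hc, one_mul]
      exact le_trans (C0_norm_apply_le b x) hbn
    · rw [hbU x hx, mul_zero, add_zero]
      exact le_trans (C0_norm_apply_le a x) (le_of_eq ha1)
  have habE : CircleEqv (a + b) := by
    intro l t
    simp only [ZeroAtInftyContinuousMap.coe_add, Pi.add_apply, ha l t, hbE l t, mul_add]
  have hbaE : CircleEqv (b - a) := by
    intro l t
    simp only [ZeroAtInftyContinuousMap.coe_sub, Pi.sub_apply, ha l t, hbE l t, mul_sub]
  have habn : ‖a + b‖ ≤ 1 := by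
    apply C0_norm_le _ zero_le_one
    intro x
    simpa using hpt 1 (by simp) x
  have habt0 : (a + b) t₀ = 1 := by
    have := haU t₀ ht₀U
    simp [this, hbt0]
  have hban : ‖b - a‖ ≤ 1 := by
    apply C0_norm_le _ zero_le_one
    intro x
    have := hpt (-1) (by simp) x
    simp only [neg_one_mul, ← sub_eq_add_neg] at this
    simpa [norm_sub_rev] using this
  have hbat0 : (b - a) t₀ = 1 := by
    have := haU t₀ ht₀U
    simp [this, hbt0]
  -- norms are exactly 1
  have habn1 : ‖a + b‖ = 1 := le_antisymm habn (by
    calc (1:ℝ) = ‖(a+b) t₀‖ := by rw [habt0]; simp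
    _ ≤ ‖a + b‖ := C0_norm_apply_le _ _)
  have hban1 : ‖b - a‖ = 1 := le_antisymm hban (by
    calc (1:ℝ) = ‖(b-a) t₀‖ := by rw [hbat0]; simp
    _ ≤ ‖b - a‖ := C0_norm_apply_le _ _)
  have habF : (a + b) ∈ {a : C₀(X, ℂ) | CircleEqv a ∧ ‖a‖ ≤ 1 ∧ a t₀ = 1} :=
    ⟨habE, habn, habt0⟩
  have hbaF : (b - a) ∈ {a : C₀(X, ℂ) | CircleEqv a ∧ ‖a‖ ≤ 1 ∧ a t₀ = 1} :=
    ⟨hbaE, hban, hbat0⟩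
  -- Δ(a+b)(s₀) = 1
  have h1 : Δ (a + b) s₀ = 1 := by
    have : Δ (a + b) ∈ {b : C₀(Y, ℂ) | CircleEqv b ∧ ‖b‖ ≤ 1 ∧ b s₀ = 1} := by
      rw [← hface]; exact Set.mem_image_of_mem Δ habF
    exact this.2.2
  -- Δ(a-b)(s₀) = -1
  have h2 : Δ (a - b) s₀ = -1 := by
    have hmem : (a - b) ∈ (fun a => -a) '' {a : C₀(X, ℂ) | CircleEqv a ∧ ‖a‖ ≤ 1 ∧ a t₀ = 1} :=
      ⟨b - a, hbaF, by simp only; abel⟩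
    have : Δ (a - b) ∈ (fun b => -b) '' (Δ '' {a : C₀(X, ℂ) | CircleEqv a ∧ ‖a‖ ≤ 1 ∧ a t₀ = 1}) := by
      rw [← hneg]; exact Set.mem_image_of_mem Δ hmem
    obtain ⟨c, hc, hceq⟩ := this
    rw [hface] at hc
    rw [← hceq]
    simp [hc.2.2]
  have habE' : CircleEqv (a - b) := by
    intro l t
    simp only [ZeroAtInftyContinuousMap.coe_sub, Pi.sub_apply, ha l t, hbE l t, mul_sub]
  have habn1' : ‖a - b‖ = 1 := by rwa [← norm_neg, neg_sub] at hban1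
  -- distances
  have hbn1 : ‖b‖ = 1 := le_antisymm hbn (by
      calc (1:ℝ) = ‖b t₀‖ := by rw [hbt0]; simp
      _ ≤ ‖b‖ := C0_norm_apply_le _ _)
  have hd1 : ‖Δ a - Δ (a + b)‖ = 1 := by
    rw [hiso a (a + b) ha ha1 habE habn1,
      show a - (a + b) = -b by abel, norm_neg, hbn1]
  have hd2 : ‖Δ a - Δ (a - b)‖ = 1 := by
    rw [hiso a (a - b) ha ha1 habE' habn1',
      show a - (a - b) = b by abel, hbn1]
  -- pointwise
  set z : ℂ := Δ a s₀ with hz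
  have e1 : ‖z - 1‖ ≤ 1 := by
    have := C0_norm_apply_le (Δ a - Δ (a + b)) s₀
    rw [hd1] at this
    simpa [hz, h1] using this
  have e2 : ‖z + 1‖ ≤ 1 := by
    have := C0_norm_apply_le (Δ a - Δ (a - b)) s₀
    rw [hd2] at this
    simp only [ZeroAtInftyContinuousMap.coe_sub, Pi.sub_apply, h2] at this
    simpa [hz, sub_neg_eq_add] using this
  -- conclude z = 0
  have q1 : Complex.normSq (z - 1) ≤ 1 := by
    rw [← Complex.sq_norm]
    calc ‖z-1‖^2 = ‖z-1‖^2 := rfl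
    _ ≤ 1 := by nlinarith [norm_nonneg (z-1)]
  have q2 : Complex.normSq (z + 1) ≤ 1 := by
    rw [← Complex.sq_norm]
    calc ‖z+1‖^2 = ‖z+1‖^2 := rfl
    _ ≤ 1 := by nlinarith [norm_nonneg (z+1)]
  simp only [Complex.normSq_apply, Complex.sub_re, Complex.sub_im, Complex.add_re,
    Complex.add_im, Complex.one_re, Complex.one_im] at q1 q2
  have hre : z.re = 0 := by nlinarith [sq_nonneg z.re, sq_nonneg z.im]
  have him : z.im = 0 := by nlinarith [sq_nonneg z.re, sq_nonneg z.im]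
  exact Complex.ext hre him
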